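/- Let K ≥ 1, let p_max ∈ ℝ^K with p_max ≥ 0, and let q⁺, q⁻, c⁺, c⁻ : ℝ^K → ℝ with q⁻ and c⁻ monotone nondecreasing with respect to the componentwise order. Define the feasible set P = {p ∈ ℝ^K : 0 ≤ p ≤ p_max and c⁺(p) − c⁻(p) ≥ 0} and the lifted feasible set F = {(t,s,p) ∈ ℝ × ℝ × ℝ^K : 0 ≤ p ≤ p_max, t ≥ 0, t + q⁻(p) ≤ q⁻(p_max), s ≥ 0, s + c⁻(p) ≤ c⁻(p_max), and s + c⁺(p) ≥ c⁻(p_max)}. Then a point p* ∈ P maximizes p ↦ q⁺(p) − q⁻(p) over P if and only if the point (t*, s*, p*) with t* = q⁻(p_max) − q⁻(p*) and s* = c⁻(p_max) − c⁻(p*) maximizes (t,s,p) ↦ q⁺(p) + t over F; moreover, in that case the optimal value of the lifted problem equals the optimal value of the original problem plus the constant q⁻(p_max). -/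

import Mathlib

/-- `x` maximizes `h` over `D`. -/
def IsMaximizerOn {α : Type*} (h : α → ℝ) (D : Set α) (x : α) : Prop :=
  x ∈ D ∧ ∀ y ∈ D, h y ≤ h x

/-- The lifting underlying Proposition 4 of the paper: maximizing a difference of
increasing functions under a difference-of-increasing constraint is equivalent,
via the auxiliary variables `t` and `s`, to maximizing an increasing objective
over the lifted feasible set. -/
theorem gee_monotonic_lifting {K : ℕ} (hK : 1 ≤ K)
    (pmax : Fin K → ℝ) (hpmax : 0 ≤ pmax)
    (qp qm cp cm : (Fin K → ℝ) → ℝ)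
    (hqm : Monotone qm) (hcm : Monotone cm)
    (pstar : Fin K → ℝ)
    (hpstar : pstar ∈ {p : Fin K → ℝ | 0 ≤ p ∧ p ≤ pmax ∧ 0 ≤ cp p - cm p}) :
    (IsMaximizerOn (fun p => qp p - qm p)
        {p : Fin K → ℝ | 0 ≤ p ∧ p ≤ pmax ∧ 0 ≤ cp p - cm p} pstar ↔
      IsMaximizerOn (fun x : ℝ × ℝ × (Fin K → ℝ) => qp x.2.2 + x.1)
        {x : ℝ × ℝ × (Fin K → ℝ) |
          0 ≤ x.2.2 ∧ x.2.2 ≤ pmax ∧ 0 ≤ x.1 ∧ x.1 + qm x.2.2 ≤ qm pmax ∧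
          0 ≤ x.2.1 ∧ x.2.1 + cm x.2.2 ≤ cm pmax ∧ cm pmax ≤ x.2.1 + cp x.2.2}
        (qm pmax - qm pstar, cm pmax - cm pstar, pstar)) ∧
    (IsMaximizerOn (fun p => qp p - qm p)
        {p : Fin K → ℝ | 0 ≤ p ∧ p ≤ pmax ∧ 0 ≤ cp p - cm p} pstar →
      qp pstar + (qm pmax - qm pstar) = (qp pstar - qm pstar) + qm pmax) := by
  obtain ⟨h0, hle, hc⟩ := hpstar
  have hqstar : qm pstar ≤ qm pmax := hqm hle
  have hcstar : cm pstar ≤ cm pmax := hcm hle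
  constructor
  · constructor
    · rintro ⟨-, hmax⟩
      refine ⟨⟨h0, hle, by dsimp only; linarith, by dsimp only; linarith, by dsimp only; linarith, by dsimp only; linarith, by dsimp only; linarith⟩, ?_⟩
      rintro ⟨t, s, p⟩ ⟨hp0, hpl, ht0, htq, hs0, hsc, hsp⟩
      have hcp : 0 ≤ cp p - cm p := by linarith
      have h1 : qp p - qm p ≤ qp pstar - qm pstar := hmax p ⟨hp0, hpl, hcp⟩
      have h2 : qm p ≤ qm pmax := hqm hpl
      dsimp only at h1 ⊢; linarith
    · rintro ⟨-, hmax⟩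
      refine ⟨⟨h0, hle, hc⟩, ?_⟩
      rintro p ⟨hp0, hpl, hcp⟩
      have h2 : qm p ≤ qm pmax := hqm hpl
      have h3 : cm p ≤ cm pmax := hcm hpl
      have := hmax (qm pmax - qm p, cm pmax - cm p, p)
        ⟨hp0, hpl, by dsimp only; linarith, by dsimp only; linarith, by dsimp only; linarith, by dsimp only; linarith, by dsimp only; linarith⟩
      simp only at this
      dsimp only at this ⊢; linarith
  · intro _; ring
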